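/- Let n ≥ a + b. If A ⊆ binom([n], a) and B ⊆ binom([n], b) are cross-intersecting (every A ∈ A meets every B ∈ B) and |A| ≥ C(x, n-a) for some real x with n-a ≤ x ≤ n, then |B| ≤ C(n, b) − C(x, b). -/

import Mathlib

set_option maxHeartbeats 1000000

open Finset FinsetFamily

noncomputable def genChoose (x : ℝ) (k : ℕ) : ℝ :=
  (∏ i ∈ Finset.range k, (x - i)) / (Nat.factorial k)

lemma genChoose_zero (x : ℝ) : genChoose x 0 = 1 := by simp [genChoose]

lemma prod_self (k : ℕ) : (∏ i ∈ Finset.range k, ((k:ℝ) - i)) = Nat.factorial k := by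
  induction k with
  | zero => simp
  | succ k ih =>
    rw [Finset.prod_range_succ']
    push_cast
    have : (∏ i ∈ Finset.range k, ((k:ℝ) + 1 - ((i:ℝ) + 1))) = Nat.factorial k := by
      rw [← ih]; apply Finset.prod_congr rfl; intro i _; ring
    rw [this, Nat.factorial_succ]
    push_cast; ring

lemma genChoose_self (k : ℕ) : genChoose (k:ℝ) k = 1 := by
  rw [genChoose, prod_self]
  exact div_self (by exact_mod_cast (Nat.factorial_pos k).ne')

lemma genChoose_nonneg {x : ℝ} {k : ℕ} (h : (k:ℝ) - 1 ≤ x) : 0 ≤ genChoose x k := by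
  apply div_nonneg _ (by positivity)
  apply Finset.prod_nonneg
  intro i hi
  rw [Finset.mem_range] at hi
  have : (i:ℝ) ≤ (k:ℝ) - 1 := by
    have : (i:ℝ) + 1 ≤ k := by exact_mod_cast hi
    linarith
  linarith

lemma genChoose_pascal (x : ℝ) (k : ℕ) :
    genChoose x (k+1) = genChoose (x-1) (k+1) + genChoose (x-1) k := by
  have hk : (Nat.factorial k : ℝ) ≠ 0 := by exact_mod_cast (Nat.factorial_pos k).ne'
  have hk1 : (Nat.factorial (k+1) : ℝ) ≠ 0 := by exact_mod_cast (Nat.factorial_pos (k+1)).ne'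
  have h1 : (∏ i ∈ Finset.range (k+1), (x - i)) = x * ∏ i ∈ Finset.range k, (x - 1 - i) := by
    rw [Finset.prod_range_succ']
    push_cast
    rw [mul_comm]
    congr 1
    · norm_num
    · apply Finset.prod_congr rfl; intro i _; push_cast; ring
  have h2 : (∏ i ∈ Finset.range (k+1), (x - 1 - i)) =
      (∏ i ∈ Finset.range k, (x - 1 - i)) * (x - 1 - k) := Finset.prod_range_succ _ _
  rw [genChoose, genChoose, genChoose, h1, h2, Nat.factorial_succ]
  push_cast
  field_simp
  ring

lemma genChoose_mono {x y : ℝ} {k : ℕ} (h : (k:ℝ) - 1 ≤ x) (hxy : x ≤ y) :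
    genChoose x k ≤ genChoose y k := by
  unfold genChoose
  have hfac : (0:ℝ) ≤ Nat.factorial k := by positivity
  apply div_le_div_of_nonneg_right ?_ hfac
  apply Finset.prod_le_prod
  · intro i hi
    rw [Finset.mem_range] at hi
    have : (i:ℝ) + 1 ≤ k := by exact_mod_cast hi
    linarith
  · intro i _; linarith

lemma exists_initSeg (n r m : ℕ)
    (hm : m ≤ #((Finset.univ : Finset (Fin n)).powersetCard r)) :
    ∃ 𝒞 : Finset (Finset (Fin n)), Finset.Colex.IsInitSeg 𝒞 r ∧ #𝒞 = m := by
  classical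
  set P := (Finset.univ : Finset (Fin n)).powersetCard r with hP
  set Q : Finset (Colex (Finset (Fin n))) := P.image toColex with hQ
  have htcinj : Function.Injective (toColex (α := Finset (Fin n))) := toColex.injective
  have hQP : #Q = #P := Finset.card_image_of_injective _ htcinj
  set l := Q.sort (· ≤ ·) with hl
  have hsort : List.Pairwise (· ≤ ·) l := Finset.pairwise_sort _ _
  have hnodup : l.Nodup := Finset.sort_nodup _ _
  have hlen : l.length = #Q := Finset.length_sort _
  have hmem : ∀ q, q ∈ l ↔ q ∈ Q := fun q => Finset.mem_sort _
  refine ⟨((l.take m).toFinset).image ofColex, ⟨?_, ?_⟩, ?_⟩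
  · -- sized
    intro s hs
    simp only [Finset.coe_image, Set.mem_image, List.coe_toFinset] at hs
    obtain ⟨q, hq, rfl⟩ := hs
    have : q ∈ Q := (hmem q).1 (List.mem_of_mem_take hq)
    rw [hQ, Finset.mem_image] at this
    obtain ⟨u, hu, rfl⟩ := this
    rw [hP, Finset.mem_powersetCard] at hu
    simpa using hu.2
  · -- downward closed
    rintro s t hs ⟨hlt, hcard⟩
    have htQ : toColex t ∈ Q := by
      rw [hQ, Finset.mem_image]
      exact ⟨t, by rw [hP, Finset.mem_powersetCard]; exact ⟨Finset.subset_univ _, hcard⟩, rfl⟩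
    have hsl : toColex s ∈ l.take m := by
      rw [Finset.mem_image] at hs
      obtain ⟨q, hq, rfl⟩ := hs
      rw [List.mem_toFinset] at hq
      simpa using hq
    have htl : toColex t ∈ l := (hmem _).2 htQ
    have hsplit := List.take_append_drop m l
    have hpw : List.Pairwise (· ≤ ·) (l.take m ++ l.drop m) := by
      rw [hsplit]; exact hsort
    rw [List.pairwise_append] at hpw
    have : toColex t ∈ l.take m := by
      rcases (List.mem_append.1 (by rw [hsplit]; exact htl)) with h | h
      · exact h
      · exact absurd (hpw.2.2 _ hsl _ h) (not_le_of_gt hlt)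
    rw [Finset.mem_image]
    exact ⟨toColex t, List.mem_toFinset.2 this, rfl⟩
  · -- card
    have hofinj : Function.Injective (ofColex (α := Finset (Fin n))) := ofColex.injective
    rw [Finset.card_image_of_injective _ hofinj,
      List.toFinset_card_of_nodup (hnodup.sublist (List.take_sublist _ _)),
      List.length_take, hlen, hQP]
    omega

lemma KKstep (n : ℕ) : ∀ (r : ℕ) (𝒜 : Finset (Finset (Fin n))), 𝒜.Nonempty →
    (𝒜 : Set (Finset (Fin n))).Sized (r+1) → ∀ x : ℝ, (r:ℝ) ≤ x →
    genChoose x (r+1) ≤ #𝒜 → genChoose x r ≤ #(∂ 𝒜) := by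
  intro r
  induction r with
  | zero =>
    intro 𝒜 h0 hsz x _ _
    rw [genChoose_zero]
    obtain ⟨s, hsmem⟩ := h0
    have hcard : s.card = 1 := hsz (mem_coe.2 hsmem)
    obtain ⟨a, ha⟩ := card_pos.1 (hcard ▸ Nat.one_pos)
    have : s.erase a ∈ ∂ 𝒜 := erase_mem_shadow hsmem ha
    have hpos : 0 < #(∂ 𝒜) := card_pos.2 ⟨_, this⟩
    exact_mod_cast hpos
  | succ r ih =>
    have H : ∀ m : ℕ, ∀ 𝒜 : Finset (Finset (Fin n)), #𝒜 ≤ m → 𝒜.Nonempty →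
        (𝒜 : Set (Finset (Fin n))).Sized (r+2) → ∀ x : ℝ, (r:ℝ) + 1 ≤ x →
        genChoose x (r+2) ≤ #𝒜 → genChoose x (r+1) ≤ #(∂ 𝒜) := by
      intro m
      induction m with
      | zero =>
        intro 𝒜 hm h0
        exact absurd (card_pos.2 h0) (by omega)
      | succ m ihm =>
        intro 𝒜 hm h0 hsz x hx hc
        classical
        -- replace 𝒜 by an initial segment 𝒞 of the same size
        have h𝒜P : 𝒜 ⊆ (Finset.univ : Finset (Fin n)).powersetCard (r+2) := fun t ht =>
          mem_powersetCard.2 ⟨subset_univ _, hsz (mem_coe.2 ht)⟩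
        obtain ⟨𝒞, h𝒞init, h𝒞card⟩ := exists_initSeg n (r+2) #𝒜 (card_le_card h𝒜P)
        have hKK : #(∂ 𝒞) ≤ #(∂ 𝒜) := by
          have HKK := Finset.kruskal_katona hsz (le_of_eq h𝒞card) h𝒞init
          convert HKK using 4
        have h𝒞0 : 𝒞.Nonempty := card_pos.1 (h𝒞card ▸ card_pos.2 h0)
        have h𝒞sized := h𝒞init.1
        obtain ⟨s₀, hs₀⟩ := h𝒞0
        have hs₀card : s₀.card = r + 2 := h𝒞sized (mem_coe.2 hs₀)
        obtain ⟨a₀, ha₀⟩ := card_pos.1 (show 0 < s₀.card by omega)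
        have hnpos : 0 < n := a₀.pos
        set z : Fin n := ⟨0, hnpos⟩ with hz
        -- initial segments are left-compressed
        have hshift : ∀ s ∈ 𝒞, ∀ a ∈ s, z ∉ s → insert z (s.erase a) ∈ 𝒞 := by
          intro s hsmem a ha hzs
          have hne : a ≠ z := fun h => hzs (h ▸ ha)
          have hzlt : z < a := lt_of_le_of_ne (by simp [hz, Fin.le_def]) (Ne.symm hne)
          have hcard : #(insert z (s.erase a)) = r + 2 := by
            rw [card_insert_of_notMem (fun h => hzs (erase_subset _ _ h)),
              card_erase_of_mem ha, h𝒞sized (mem_coe.2 hsmem)]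
            omega
          refine h𝒞init.2 hsmem ⟨?_, hcard⟩
          rw [Finset.Colex.toColex_lt_toColex_iff_exists_forall_lt]
          refine ⟨a, ha, by simp [hne], ?_⟩
          intro b hb hbs
          rcases mem_insert.1 hb with rfl | hb'
          · exact hzlt
          · exact absurd (mem_of_mem_erase hb') hbs
        set 𝒞₁ : Finset (Finset (Fin n)) :=
          (𝒞.filter (fun s => z ∈ s)).image (fun s => s.erase z) with h𝒞₁
        set 𝒞₀ : Finset (Finset (Fin n)) := 𝒞.filter (fun s => z ∉ s) with h𝒞₀
        have mem𝒞₁ : ∀ t, t ∈ 𝒞₁ ↔ z ∉ t ∧ insert z t ∈ 𝒞 := by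
          intro t
          constructor
          · rw [h𝒞₁, mem_image]
            rintro ⟨s, hsmem, rfl⟩
            rw [mem_filter] at hsmem
            exact ⟨notMem_erase _ _, by rw [insert_erase hsmem.2]; exact hsmem.1⟩
          · rintro ⟨hzt, hins⟩
            rw [h𝒞₁, mem_image]
            exact ⟨insert z t, mem_filter.2 ⟨hins, mem_insert_self _ _⟩, erase_insert hzt⟩
        have hcard𝒞₁ : #𝒞₁ = #(𝒞.filter (fun s => z ∈ s)) := by
          apply card_image_of_injOn
          intro s₁ h₁ s₂ h₂ hee
          rw [mem_coe, mem_filter] at h₁ h₂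
          dsimp only at hee
          rw [← insert_erase h₁.2, ← insert_erase h₂.2, hee]
        have hcard_split : #𝒞 = #𝒞₀ + #𝒞₁ := by
          rw [hcard𝒞₁, h𝒞₀, add_comm]
          exact (card_filter_add_card_filter_not _).symm
        have h𝒞₁0 : 𝒞₁.Nonempty := by
          by_cases hzs : z ∈ s₀
          · exact ⟨s₀.erase z, (mem𝒞₁ _).2 ⟨notMem_erase _ _, by rwa [insert_erase hzs]⟩⟩
          · refine ⟨(insert z (s₀.erase a₀)).erase z, (mem𝒞₁ _).2 ⟨notMem_erase _ _, ?_⟩⟩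
            rw [insert_erase (mem_insert_self _ _)]
            exact hshift s₀ hs₀ a₀ ha₀ hzs
        have h𝒞₁sized : (𝒞₁ : Set (Finset (Fin n))).Sized (r+1) := by
          intro t ht
          rw [mem_coe, mem𝒞₁] at ht
          have := h𝒞sized (mem_coe.2 ht.2)
          rw [card_insert_of_notMem ht.1] at this
          omega
        have hsub : ∂ 𝒞₀ ⊆ 𝒞₁ := by
          intro t ht
          obtain ⟨s, hsmem, a, ha, rfl⟩ := mem_shadow_iff.1 ht
          rw [h𝒞₀, mem_filter] at hsmem
          refine (mem𝒞₁ _).2 ⟨fun h => hsmem.2 (erase_subset _ _ h), ?_⟩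
          exact hshift s hsmem.1 a ha hsmem.2
        have hzsh : ∀ t ∈ ∂ 𝒞₁, z ∉ t := by
          intro t ht
          obtain ⟨u, humem, a, ha, rfl⟩ := mem_shadow_iff.1 ht
          exact fun h => ((mem𝒞₁ u).1 humem).1 (erase_subset _ _ h)
        have hlower : #𝒞₁ + #(∂ 𝒞₁) ≤ #(∂ 𝒞) := by
          have h1 : 𝒞₁ ⊆ ∂ 𝒞 := by
            intro t ht
            obtain ⟨hzt, hins⟩ := (mem𝒞₁ t).1 ht
            have := erase_mem_shadow hins (mem_insert_self z t)
            rwa [erase_insert hzt] at this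
          have h2 : (∂ 𝒞₁).image (insert z) ⊆ ∂ 𝒞 := by
            intro t ht
            rw [mem_image] at ht
            obtain ⟨u, hu, rfl⟩ := ht
            obtain ⟨v, hvmem, a, ha, rfl⟩ := mem_shadow_iff.1 hu
            obtain ⟨hzv, hins⟩ := (mem𝒞₁ v).1 hvmem
            have hne : a ≠ z := fun h => hzv (h ▸ ha)
            have := erase_mem_shadow hins (mem_insert_of_mem ha)
            rwa [erase_insert_of_ne hne.symm] at this
          have hdisj : Disjoint 𝒞₁ ((∂ 𝒞₁).image (insert z)) := by
            rw [disjoint_left]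
            intro t ht htim
            rw [mem_image] at htim
            obtain ⟨u, _, rfl⟩ := htim
            exact ((mem𝒞₁ _).1 ht).1 (mem_insert_self _ _)
          have himcard : #((∂ 𝒞₁).image (insert z)) = #(∂ 𝒞₁) := by
            apply card_image_of_injOn
            intro t₁ h₁ t₂ h₂ hee
            have hz₁ := hzsh _ (mem_coe.1 h₁)
            have hz₂ := hzsh _ (mem_coe.1 h₂)
            rw [← erase_insert hz₁, ← erase_insert hz₂, hee]
          calc #𝒞₁ + #(∂ 𝒞₁) = #(𝒞₁ ∪ (∂ 𝒞₁).image (insert z)) := by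
                rw [card_union_of_disjoint hdisj, himcard]
            _ ≤ #(∂ 𝒞) := card_le_card (union_subset h1 h2)
        -- key claim
        have hmain1 : genChoose (x-1) (r+1) ≤ (#𝒞₁ : ℝ) := by
          by_contra hlt
          push_neg at hlt
          by_cases hxr : x < (r:ℝ) + 2
          · have hb : genChoose (x-1) (r+1) ≤ 1 := by
              have := genChoose_mono (x := x - 1) (y := ((r+1:ℕ):ℝ)) (k := r+1)
                (by push_cast; linarith) (by push_cast; linarith)
              rwa [genChoose_self] at this
            have hlt1 : (#𝒞₁ : ℝ) < 1 := lt_of_lt_of_le hlt hb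
            have : #𝒞₁ = 0 := by exact_mod_cast Nat.lt_one_iff.1 (by exact_mod_cast hlt1)
            exact absurd this (card_ne_zero_of_mem h𝒞₁0.choose_spec)
          · push_neg at hxr
            have hpascal : genChoose x (r+2) = genChoose (x-1) (r+2) + genChoose (x-1) (r+1) :=
              genChoose_pascal x (r+1)
            have hceq : (#𝒞 : ℝ) = #𝒞₀ + #𝒞₁ := by exact_mod_cast hcard_split
            have hc' : genChoose x (r+2) ≤ (#𝒞 : ℝ) := by rw [h𝒞card]; exact hc
            have h𝒞₀big : genChoose (x-1) (r+2) < (#𝒞₀ : ℝ) := by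
              push_cast at hceq ⊢
              linarith
            have h𝒞₀0 : 𝒞₀.Nonempty := by
              rw [← card_pos]
              have hnn : (0:ℝ) ≤ genChoose (x-1) (r+2) :=
                genChoose_nonneg (by push_cast; linarith)
              have : (0:ℝ) < (#𝒞₀ : ℝ) := lt_of_le_of_lt hnn h𝒞₀big
              exact_mod_cast this
            have h𝒞₀sized : (𝒞₀ : Set (Finset (Fin n))).Sized (r+2) := fun t ht =>
              h𝒞sized (mem_coe.2 (mem_of_mem_filter _ (mem_coe.1 ht)))
            have h𝒞₀le : #𝒞₀ ≤ m := by
              have h𝒞₁pos : 0 < #𝒞₁ := card_pos.2 h𝒞₁0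
              have : #𝒞 = #𝒜 := h𝒞card
              omega
            have hstep := ihm 𝒞₀ h𝒞₀le h𝒞₀0 h𝒞₀sized (x-1) (by linarith) (le_of_lt h𝒞₀big)
            have hle : (#(∂ 𝒞₀) : ℝ) ≤ (#𝒞₁ : ℝ) := by exact_mod_cast card_le_card hsub
            linarith
        have hmain2 : genChoose (x-1) r ≤ (#(∂ 𝒞₁) : ℝ) :=
          ih 𝒞₁ h𝒞₁0 h𝒞₁sized (x-1) (by linarith) hmain1
        have hpascal2 : genChoose x (r+1) = genChoose (x-1) (r+1) + genChoose (x-1) r :=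
          genChoose_pascal x r
        have hfin : (#𝒞₁ : ℝ) + (#(∂ 𝒞₁) : ℝ) ≤ (#(∂ 𝒜) : ℝ) := by
          have : (#𝒞₁ + #(∂ 𝒞₁) : ℕ) ≤ #(∂ 𝒜) := le_trans hlower hKK
          exact_mod_cast this
        linarith
    intro 𝒜 h0 hsz x hx hc
    exact H #𝒜 𝒜 le_rfl h0 hsz x (by push_cast at hx ⊢; linarith) hc

lemma KKiter (n r : ℕ) (𝒜 : Finset (Finset (Fin n))) (h0 : 𝒜.Nonempty)
    (hsz : (𝒜 : Set (Finset (Fin n))).Sized r) (x : ℝ) (hx : (r:ℝ) ≤ x)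
    (hc : genChoose x r ≤ #𝒜) :
    ∀ i, i ≤ r → genChoose x (r - i) ≤ #(∂^[i] 𝒜) ∧ (∂^[i] 𝒜).Nonempty := by
  intro i
  induction i with
  | zero => intro _; simpa using ⟨hc, h0⟩
  | succ i ihi =>
    intro hir
    obtain ⟨hci, h0i⟩ := ihi (Nat.le_of_succ_le hir)
    have hszi : ((∂^[i] 𝒜 : Finset (Finset (Fin n))) : Set (Finset (Fin n))).Sized (r - i) :=
      hsz.shadow_iterate
    have hri : r - i = (r - (i+1)) + 1 := by omega
    rw [Function.iterate_succ_apply']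
    constructor
    · have h1 : genChoose x ((r - (i+1)) + 1) ≤ (#(∂^[i] 𝒜) : ℝ) := by rw [← hri]; exact hci
      have h2 : ((∂^[i] 𝒜 : Finset (Finset (Fin n))) : Set (Finset (Fin n))).Sized
          ((r - (i+1)) + 1) := by rw [← hri]; exact hszi
      have h3 : ((r - (i+1) : ℕ) : ℝ) ≤ x :=
        le_trans (by exact_mod_cast Nat.sub_le r (i+1)) hx
      exact KKstep n (r - (i+1)) _ h0i h2 x h3 h1
    · obtain ⟨s, hsmem⟩ := h0i
      have hcs : #s = r - i := hszi (mem_coe.2 hsmem)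
      obtain ⟨a, ha⟩ := card_pos.1 (show 0 < #s by omega)
      exact ⟨s.erase a, erase_mem_shadow hsmem ha⟩

theorem stmt13 (n a b : ℕ) (hn : a + b ≤ n)
    (A : Finset (Finset ℕ)) (B : Finset (Finset ℕ))
    (hA : A ⊆ (Finset.Icc 1 n).powersetCard a)
    (hB : B ⊆ (Finset.Icc 1 n).powersetCard b)
    (hcross : ∀ S ∈ A, ∀ T ∈ B, (S ∩ T).Nonempty)
    (x : ℝ) (hx1 : ((n : ℝ) - a) ≤ x) (hx2 : x ≤ (n : ℝ))
    (hAcard : genChoose x (n - a) ≤ (A.card : ℝ)) :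
    (B.card : ℝ) ≤ (n.choose b : ℝ) - genChoose x b := by
  classical
  have han : a ≤ n := by omega
  have hbn : b ≤ n - a := by omega
  set e : Fin n ↪ ℕ := ⟨fun i => (i : ℕ) + 1, fun i j h => by simpa [Fin.ext_iff] using h⟩ with he
  -- transfer to Fin n
  have hrange : ∀ S : Finset ℕ, S ⊆ Finset.Icc 1 n →
      (Finset.univ.filter (fun i : Fin n => ((i : ℕ) + 1) ∈ S)).map e = S := by
    intro S hS
    ext y
    simp only [mem_map, mem_filter, mem_univ, true_and, he, Function.Embedding.coeFn_mk]
    constructor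
    · rintro ⟨i, hi, rfl⟩; exact hi
    · intro hy
      have hy' := hS hy
      rw [Finset.mem_Icc] at hy'
      exact ⟨⟨y - 1, by omega⟩, by simpa [Nat.sub_add_cancel hy'.1] using hy, by show y - 1 + 1 = y; omega⟩
  set 𝔞 : Finset (Finset (Fin n)) := Finset.univ.filter (fun s => s.map e ∈ A) with h𝔞
  set 𝔟 : Finset (Finset (Fin n)) := Finset.univ.filter (fun s => s.map e ∈ B) with h𝔟
  have himgA : 𝔞.image (fun s => s.map e) = A := by
    apply Finset.Subset.antisymm
    · intro S hS
      rw [mem_image] at hS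
      obtain ⟨s, hs, rfl⟩ := hS
      exact (mem_filter.1 hs).2
    · intro S hS
      have hsub : S ⊆ Finset.Icc 1 n := (mem_powersetCard.1 (hA hS)).1
      refine mem_image.2 ⟨_, mem_filter.2 ⟨mem_univ _, ?_⟩, hrange S hsub⟩
      rwa [hrange S hsub]
  have himgB : 𝔟.image (fun s => s.map e) = B := by
    apply Finset.Subset.antisymm
    · intro S hS
      rw [mem_image] at hS
      obtain ⟨s, hs, rfl⟩ := hS
      exact (mem_filter.1 hs).2
    · intro S hS
      have hsub : S ⊆ Finset.Icc 1 n := (mem_powersetCard.1 (hB hS)).1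
      refine mem_image.2 ⟨_, mem_filter.2 ⟨mem_univ _, ?_⟩, hrange S hsub⟩
      rwa [hrange S hsub]
  have hmapinj : Function.Injective (fun s : Finset (Fin n) => s.map e) :=
    fun s t h => Finset.map_injective e h
  have hcardA : #𝔞 = #A := by rw [← himgA, card_image_of_injective _ hmapinj]
  have hcardB : #𝔟 = #B := by rw [← himgB, card_image_of_injective _ hmapinj]
  have hsz𝔞 : ∀ s ∈ 𝔞, #s = a := by
    intro s hs
    have := (mem_powersetCard.1 (hA (mem_filter.1 hs).2)).2
    rwa [card_map] at this
  have hsz𝔟 : ∀ s ∈ 𝔟, #s = b := by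
    intro s hs
    have := (mem_powersetCard.1 (hB (mem_filter.1 hs).2)).2
    rwa [card_map] at this
  have hcross' : ∀ s ∈ 𝔞, ∀ t ∈ 𝔟, (s ∩ t).Nonempty := by
    intro s hs t ht
    have := hcross (s.map e) (mem_filter.1 hs).2 (t.map e) (mem_filter.1 ht).2
    rw [← Finset.map_inter] at this
    exact Finset.map_nonempty.1 this
  -- complements
  set 𝒜' : Finset (Finset (Fin n)) := 𝔞.image compl with h𝒜'
  have hcomplinj : Function.Injective (compl : Finset (Fin n) → Finset (Fin n)) := fun s t h => by
    simpa using congrArg compl h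
  have hcard𝒜' : #𝒜' = #A := by rw [h𝒜', card_image_of_injective _ hcomplinj, hcardA]
  have hsz𝒜' : (𝒜' : Set (Finset (Fin n))).Sized (n - a) := by
    intro t ht
    rw [mem_coe, h𝒜', mem_image] at ht
    obtain ⟨s, hs, rfl⟩ := ht
    rw [Finset.card_compl, Fintype.card_fin, hsz𝔞 s hs]
  -- A is nonempty
  have hxr : ((n - a : ℕ) : ℝ) ≤ x := by
    rw [Nat.cast_sub han]; exact hx1
  have hone : (1:ℝ) ≤ #A := by
    have := genChoose_mono (x := ((n - a : ℕ) : ℝ)) (y := x) (k := n - a) (by linarith) hxr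
    rw [genChoose_self] at this
    linarith
  have hA0 : A.Nonempty := by
    rw [← card_pos]
    exact_mod_cast lt_of_lt_of_le zero_lt_one hone
  have h𝒜'0 : 𝒜'.Nonempty := by
    rw [← card_pos, hcard𝒜', card_pos]; exact hA0
  -- iterated shadow
  set i : ℕ := (n - a) - b with hi
  have hib : (n - a) - i = b := by omega
  obtain ⟨hsh, -⟩ := KKiter n (n - a) 𝒜' h𝒜'0 hsz𝒜' x hxr
    (by rw [hcard𝒜']; exact hAcard) i (by omega)
  rw [hib] at hsh
  -- disjointness
  have hdisj : Disjoint 𝔟 (∂^[i] 𝒜') := by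
    rw [disjoint_left]
    intro t ht htsh
    obtain ⟨c, hc, htc, -⟩ := mem_shadow_iterate_iff_exists_sdiff.1 htsh
    rw [h𝒜', mem_image] at hc
    obtain ⟨s, hs, rfl⟩ := hc
    obtain ⟨w, hw⟩ := hcross' s hs t ht
    rw [mem_inter] at hw
    exact (Finset.mem_compl.1 (htc hw.2)) hw.1
  have hsub𝔟 : 𝔟 ⊆ Finset.univ.powersetCard b := fun t ht =>
    mem_powersetCard.2 ⟨subset_univ _, hsz𝔟 t ht⟩
  have hszsh : ((∂^[i] 𝒜' : Finset (Finset (Fin n))) : Set (Finset (Fin n))).Sized b := by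
    have := hsz𝒜'.shadow_iterate (k := i)
    rwa [hib] at this
  have hsubsh : ∂^[i] 𝒜' ⊆ Finset.univ.powersetCard b := fun t ht =>
    mem_powersetCard.2 ⟨subset_univ _, hszsh (mem_coe.2 ht)⟩
  have hunion : #𝔟 + #(∂^[i] 𝒜') ≤ n.choose b := by
    rw [← card_union_of_disjoint hdisj]
    calc #(𝔟 ∪ ∂^[i] 𝒜') ≤ #((Finset.univ : Finset (Fin n)).powersetCard b) :=
          card_le_card (union_subset hsub𝔟 hsubsh)
      _ = n.choose b := by rw [card_powersetCard, card_univ, Fintype.card_fin]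
  have hcast : (#𝔟 : ℝ) + (#(∂^[i] 𝒜') : ℝ) ≤ (n.choose b : ℝ) := by exact_mod_cast hunion
  rw [← hcardB]
  linarith
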